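/- Let V be a Lorentzian vector space that is complete with respect to the Wick-rotated norm n coming from a Lorentz decomposition V = ℝt ⊕ W (a Lorentz–Hilbert space), and let F ⊆ C_t⁺(V) be a generating linear cone with V = span(F). Then V is sequentially forward complete for the order x ≤ y iff y − x ∈ F: every nondecreasing sequence (v_k) bounded above by some y ∈ V converges in the n-norm topology. -/
import Mathlib


open scoped RealInnerProductSpace

/-- Let `V` be a Lorentz–Hilbert space: a real Hilbert space (the inner
product `⟪·,·⟫` being the Wick rotation associated to `t`, `⟪t,t⟫ = 1`) whose
Lorentzian form is `B x y = 2⟪x,t⟫⟪y,t⟫ - ⟪x,y⟫`. If `F ⊆ C_t⁺(V)` is a generating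
linear cone contained in the causal future, then `V` is sequentially forward complete
for the order `x ≤ y ↔ y - x ∈ F`: every nondecreasing sequence bounded above
converges. -/
theorem lorentz_hilbert_forward_complete {V : Type*} [NormedAddCommGroup V]
    [InnerProductSpace ℝ V] [CompleteSpace V]
    (t : V) (ht : ⟪t, t⟫ = 1)
    (B : V → V → ℝ) (hB : ∀ x y : V, B x y = 2 * ⟪x, t⟫ * ⟪y, t⟫ - ⟪x, y⟫)
    (F : Set V)
    (hF_future : ∀ x ∈ F, 0 ≤ B x x ∧ 0 ≤ B x t)
    (hF_add : ∀ x ∈ F, ∀ y ∈ F, x + y ∈ F)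
    (hF_smul : ∀ a : ℝ, 0 ≤ a → ∀ x ∈ F, a • x ∈ F)
    (hgen : ∀ x : V, ∃ u ∈ F, ∃ v ∈ F, x = u - v)
    (v : ℕ → V) (y : V)
    (hmono : ∀ k : ℕ, v (k + 1) - v k ∈ F)
    (hbdd : ∀ k : ℕ, y - v k ∈ F) :
    ∃ L : V, Filter.Tendsto v Filter.atTop (nhds L) := by
  -- For x ∈ F, ⟪x,t⟫ ≥ 0
  have hxt : ∀ x ∈ F, 0 ≤ ⟪x, t⟫ := by
    intro x hx
    have h := (hF_future x hx).2
    rw [hB, ht] at h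
    linarith
  -- For x ∈ F, ‖x‖ ≤ √2 * ⟪x,t⟫
  have hnorm : ∀ x ∈ F, ‖x‖ ≤ Real.sqrt 2 * ⟪x, t⟫ := by
    intro x hx
    have h := (hF_future x hx).1
    rw [hB] at h
    have hxx : ⟪x, x⟫ = ‖x‖ ^ 2 := real_inner_self_eq_norm_sq x
    have ha : 0 ≤ ⟪x, t⟫ := hxt x hx
    have hs : Real.sqrt 2 ^ 2 = 2 := Real.sq_sqrt (by norm_num)
    have hs0 : 0 ≤ Real.sqrt 2 := Real.sqrt_nonneg 2
    have key : ‖x‖ ^ 2 ≤ (Real.sqrt 2 * ⟪x, t⟫) ^ 2 := by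
      rw [mul_pow, hs]; nlinarith
    exact (pow_le_pow_iff_left₀ (norm_nonneg x) (by positivity) (by norm_num)).1 key
  -- 0 ∈ F
  have h0 : (0 : V) ∈ F := by
    obtain ⟨u, hu, -⟩ := hgen 0
    have := hF_smul 0 le_rfl u hu
    simpa using this
  -- differences are in F
  have hdiff : ∀ k m : ℕ, k ≤ m → v m - v k ∈ F := by
    intro k m hkm
    induction m, hkm using Nat.le_induction with
    | base => simpa using h0
    | succ m hkm ih =>
      have := hF_add _ (hmono m) _ ih
      simpa [sub_add_sub_cancel] using this
  set f : ℕ → ℝ := fun k => ⟪v k, t⟫ with hf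
  have hfmono : Monotone f := by
    apply monotone_nat_of_le_succ
    intro k
    have := hxt _ (hmono k)
    rw [inner_sub_left] at this
    simpa [hf] using by linarith
  have hfbdd : BddAbove (Set.range f) := by
    refine ⟨⟪y, t⟫, ?_⟩
    rintro r ⟨k, rfl⟩
    have := hxt _ (hbdd k)
    rw [inner_sub_left] at this
    simpa [hf] using by linarith
  obtain ⟨S, hS⟩ : ∃ S : ℝ, Filter.Tendsto f Filter.atTop (nhds S) :=
    ⟨_, tendsto_atTop_ciSup hfmono hfbdd⟩
  have hfleS : ∀ k, f k ≤ S := fun k =>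
    hfmono.ge_of_tendsto hS k
  -- v is Cauchy
  have hcauchy : CauchySeq v := by
    apply cauchySeq_of_le_tendsto_0 (fun N => Real.sqrt 2 * (S - f N))
    · intro n m N hn hm
      rcases le_total n m with h | h
      · have hmem := hdiff n m h
        have h1 := hnorm _ hmem
        rw [inner_sub_left] at h1
        have h2 : f n ≤ f m := hfmono h
        have h3 : f N ≤ f n := hfmono hn
        have h4 : f m ≤ S := hfleS m
        have hs0 : 0 ≤ Real.sqrt 2 := Real.sqrt_nonneg 2
        rw [dist_eq_norm, ← norm_neg]
        simp only [neg_sub]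
        nlinarith
      · have hmem := hdiff m n h
        have h1 := hnorm _ hmem
        rw [inner_sub_left] at h1
        have h2 : f m ≤ f n := hfmono h
        have h3 : f N ≤ f m := hfmono hm
        have h4 : f n ≤ S := hfleS n
        have hs0 : 0 ≤ Real.sqrt 2 := Real.sqrt_nonneg 2
        rw [dist_eq_norm]
        nlinarith
    · have : Filter.Tendsto (fun N => S - f N) Filter.atTop (nhds (S - S)) :=
        (tendsto_const_nhds).sub hS
      rw [sub_self] at this
      simpa using (this.const_mul (Real.sqrt 2))
  exact cauchySeq_tendsto_of_complete hcauchy
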